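/- Let n ≥ 1, m ≥ 1, and let 𝔞 = (a_0, 0, a_2, …, a_n) ∈ A_n(m) be an initial element (so a_1 = 0 and a_0 = spr(𝔞)). Then: (i) the color sequence of the transversal chain T_0(𝔞) is (1^{a_0−a_2}, 2^{a_0−a_2−a_3}, …, j^{a_0−a_j−a_{j+1}}, …, n^{a_0−a_n}), i.e. color j occurs with multiplicity a_0 − a_j − a_{j+1} for 1 ≤ j ≤ n (with the conventions a_1 = 0 and a_{n+1} = 0), and the colors occur in nondecreasing order; (ii) the terminal element of T_0(𝔞) is 𝔟 = (a_2, …, a_n, 0, a_0); (iii) T_0(𝔞) = T_{n−1}(𝔟). -/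

import Mathlib

/- Common definitions following K. O'Hara's spread/degree and the signature
   refinement; elements of A_n(m) are lists of naturals of length n+1 and sum m. -/

namespace OHara

/-- The spread of `a = (a_0, …, a_n)`: the maximum of `a_i + a_{i+1}` over `0 ≤ i ≤ n-1`
(`0` if the list has length ≤ 1). -/
def sprL (a : List ℕ) : ℕ :=
  (Finset.range (a.length - 1)).sup (fun i => a.getD i 0 + a.getD (i + 1) 0)

/-- `M(a)`: the set of left indices of maximal pairs. -/
def Mset (a : List ℕ) : Finset ℕ :=
  (Finset.range (a.length - 1)).filter (fun i => a.getD i 0 + a.getD (i + 1) 0 = sprL a)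

/-- The connected component (maximal interval of consecutive integers) of `i` inside `S`. -/
def compF (S : Finset ℕ) (i : ℕ) : Finset ℕ :=
  S.filter (fun j => Finset.Icc (min i j) (max i j) ⊆ S)

/-- The left endpoints of the maximal intervals of consecutive integers of `S`. -/
def leftEnds (S : Finset ℕ) : Finset ℕ :=
  S.filter (fun i => i = 0 ∨ (i - 1) ∉ S)

/-- O'Hara's degree: the sum over the maximal intervals `D` of `M(a)` of `⌈|D|/2⌉`. -/
def ecdL (a : List ℕ) : ℕ :=
  ∑ i ∈ leftEnds (Mset a), ((compF (Mset a) i).card + 1) / 2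

/-- The set of active indices `Act(a) = M(a) ∪ (1 + M(a))`. -/
def ActF (a : List ℕ) : Finset ℕ :=
  Mset a ∪ (Mset a).image (· + 1)

/-- An index `j` survives in `ω(a)` iff it is not active, or it is the left endpoint `c` of a
maximal interval `D = [c, c+d]` of `M(a)` with `d` odd (i.e. `|D|` even). -/
def survivesB (a : List ℕ) (j : ℕ) : Bool :=
  decide (j ∉ ActF a ∨ (j ∈ leftEnds (Mset a) ∧ Even (compF (Mset a) j).card))

/-- `ω(a)`: the result of removing from `a` the largest possible number of maximal pairs. -/
def omegaL (a : List ℕ) : List ℕ :=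
  ((List.range a.length).filter (fun j => survivesB a j)).map (fun j => a.getD j 0)

/-- Fuel-driven recursion computing the signature (the fuel `a.length` in `sigmaL`
always suffices, since `ω` shortens a list of length ≥ 3 by at least 2). -/
def sigmaAux : ℕ → List ℕ → List ℕ
  | _, [] => []
  | 0, a => [a.sum]
  | fuel + 1, a =>
    if a.length ≤ 2 then [a.sum]
    else List.replicate (ecdL a - 1) 0 ++ [sprL a - sprL (omegaL a)] ++ sigmaAux fuel (omegaL a)

/-- The signature `σ(a)`. -/
def sigmaL (a : List ℕ) : List ℕ := sigmaAux a.length a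

/-- `m = Σ_{j=0}^k (j+1)·d_j` determined by a signature `(d_0, …, d_k)`. -/
def mOf (ds : List ℕ) : ℕ := ∑ j ∈ Finset.range ds.length, (j + 1) * ds.getD j 0

/-- `Q_n(d_0, …, d_k)`: the set of elements of `A_n(m)` of signature `(d_0, …, d_k)`. -/
def Qset (n : ℕ) (ds : List ℕ) : Set (List ℕ) :=
  {a | a.length = n + 1 ∧ a.sum = mOf ds ∧ sigmaL a = ds}

/-- The rank `rk(a) = Σ i·a_i`. -/
def rkL (a : List ℕ) : ℕ := ∑ i ∈ Finset.range a.length, i * a.getD i 0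

/-- `b` covers `a` in `A_n(m)`: `b` is obtained from `a` by replacing some consecutive pair
`(a_i, a_{i+1})` by `(a_i - 1, a_{i+1} + 1)`. -/
def coversL (b a : List ℕ) : Prop :=
  ∃ i, i + 1 < a.length ∧ 0 < a.getD i 0 ∧
    b = (a.set i (a.getD i 0 - 1)).set (i + 1) (a.getD (i + 1) 0 + 1)

/-- Normalization phase of the raising algorithm: starting at index `i ∈ M(a)`, repeatedly
replace `i` by `i - 1` as long as `i ≥ 1` and `a_{i+1} = a_{i-1}`. -/
def rnormIdx (a : List ℕ) : ℕ → ℕ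
  | 0 => 0
  | i + 1 => if a.getD (i + 2) 0 = a.getD i 0 then rnormIdx a i else i + 1

/-- One move of the raising algorithm from `(a, i)` with `i ∈ M(a)`: after normalizing the
index, either halt (`none`, at an initial element) or perform one step. -/
def raiseMove (a : List ℕ) (i : ℕ) : Option (List ℕ × ℕ) :=
  let j := rnormIdx a i
  if a.getD (j + 1) 0 = 0 then none
  else some ((a.set j (a.getD j 0 + 1)).set (j + 1) (a.getD (j + 1) 0 - 1), j)

/-- The list of elements produced by iterating the raising algorithm (including the start). -/
def raiseList : ℕ → List ℕ → ℕ → List (List ℕ)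
  | 0, a, _ => [a]
  | fuel + 1, a, i =>
    match raiseMove a i with
    | none => [a]
    | some (a', j) => a :: raiseList fuel a' j

/-- Normalization phase of the lowering algorithm: starting at index `i ∈ M(a)`, repeatedly
replace `i` by `i + 1` as long as `i ≤ n - 2` and `a_i = a_{i+2}` (fuel-driven). -/
def lnormIdx (a : List ℕ) : ℕ → ℕ → ℕ
  | 0, i => i
  | fuel + 1, i =>
    if i + 2 < a.length ∧ a.getD i 0 = a.getD (i + 2) 0 then lnormIdx a fuel (i + 1) else i

/-- One move of the lowering algorithm from `(a, i)` with `i ∈ M(a)`: after normalizing the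
index, either halt (`none`, at a terminal element) or perform one step. -/
def lowerMove (a : List ℕ) (i : ℕ) : Option (List ℕ × ℕ) :=
  let j := lnormIdx a a.length i
  if a.getD j 0 = 0 then none
  else some ((a.set j (a.getD j 0 - 1)).set (j + 1) (a.getD (j + 1) 0 + 1), j)

/-- The list of elements produced by iterating the lowering algorithm (including the start). -/
def lowerList : ℕ → List ℕ → ℕ → List (List ℕ)
  | 0, a, _ => [a]
  | fuel + 1, a, i =>
    match lowerMove a i with
    | none => [a]
    | some (a', j) => a :: lowerList fuel a' j

/-- The colors of the successive covering relations produced by the lowering algorithm: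
a lowering step at index `j` replaces `(a_j, a_{j+1})` by `(a_j - 1, a_{j+1} + 1)` and has
color `j + 1`. -/
def lowerColors : ℕ → List ℕ → ℕ → List ℕ
  | 0, _, _ => []
  | fuel + 1, a, i =>
    match lowerMove a i with
    | none => []
    | some (a', j) => (j + 1) :: lowerColors fuel a' j

/-- The transversal chain `T_i(a)`: the elements obtained from `a` by the raising algorithm
together with those obtained by the lowering algorithm, both started at index `i ∈ M(a)`.
(The fuels `rk(a)` and `a.length * a.sum` are always sufficient, since each raising move
decreases the rank by 1 and each lowering move increases it by 1, within `[0, n·m]`.) -/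
def Tset (a : List ℕ) (i : ℕ) : Set (List ℕ) :=
  {x | x ∈ raiseList (rkL a) a i ∨ x ∈ lowerList (a.length * a.sum) a i}

end OHara

namespace OHara

/-! ### Auxiliary infrastructure -/

private lemma getD_map_range (f : ℕ → ℕ) (k i : ℕ) :
    ((List.range k).map f).getD i 0 = if i < k then f i else 0 := by
  rcases Nat.lt_or_ge i k with h | h
  · rw [List.getD_eq_getElem _ _ (by simpa using h)]
    simp [h]
  · rw [List.getD_eq_default _ _ (by simpa using h), if_neg (by omega)]

private lemma set_map_range (f : ℕ → ℕ) (k j v : ℕ) :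
    ((List.range k).map f).set j v
      = (List.range k).map (fun i => if i = j then v else f i) := by
  apply List.ext_getElem (by simp)
  intro i h1 h2
  simp only [List.length_set, List.length_map, List.length_range] at h1
  rw [List.getElem_set]
  rcases eq_or_ne j i with h | h
  · simp [h]
  · simp [List.getElem_map, h, Ne.symm h]

/-- The generic state of the lowering/raising run:
`st A n t x = (A 2, …, A t, x, A 0 - x, A (t+1), …, A n)`. -/
def stf (A : ℕ → ℕ) (t x i : ℕ) : ℕ :=
  if i + 1 < t then A (i + 2) else if i + 1 = t then x else if i = t then A 0 - x else A i

def st (A : ℕ → ℕ) (n t x : ℕ) : List ℕ := (List.range (n + 1)).map (stf A t x)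

lemma st_length (A : ℕ → ℕ) (n t x : ℕ) : (st A n t x).length = n + 1 := by
  simp [st]

lemma st_getD (A : ℕ → ℕ) (n t x i : ℕ) :
    (st A n t x).getD i 0 = if i < n + 1 then stf A t x i else 0 :=
  getD_map_range _ _ _

lemma stf_left {A : ℕ → ℕ} {t x i : ℕ} (h : i + 1 < t) : stf A t x i = A (i + 2) :=
  if_pos h

lemma stf_x {A : ℕ → ℕ} {t x i : ℕ} (h : i + 1 = t) : stf A t x i = x := by
  unfold stf; rw [if_neg (by omega), if_pos h]

lemma stf_y {A : ℕ → ℕ} {t x i : ℕ} (h : i = t) (ht : 1 ≤ t) : stf A t x i = A 0 - x := by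
  unfold stf; rw [if_neg (by omega), if_neg (by omega), if_pos h]

lemma stf_right {A : ℕ → ℕ} {t x i : ℕ} (h : t < i) : stf A t x i = A i := by
  unfold stf; rw [if_neg (by omega), if_neg (by omega), if_neg (by omega)]


section StateLemmas

variable {A : ℕ → ℕ} {n t x : ℕ}

/-- `getD` at position `t-1` (the moving entry). -/
lemma st_getD_tm1 (ht1 : 1 ≤ t) (htn : t ≤ n) : (st A n t x).getD (t - 1) 0 = x := by
  rw [st_getD, if_pos (by omega), stf_x (by omega)]

/-- `getD` at position `t`. -/
lemma st_getD_t (ht1 : 1 ≤ t) (htn : t ≤ n) : (st A n t x).getD t 0 = A 0 - x := by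
  rw [st_getD, if_pos (by omega), stf_y rfl ht1]

/-- `getD` at position `t+1` (needs `A` to vanish beyond `n`). -/
lemma st_getD_tp1 (ht1 : 1 ≤ t) (htn : t ≤ n) (htop : ∀ i, n + 1 ≤ i → A i = 0) :
    (st A n t x).getD (t + 1) 0 = A (t + 1) := by
  rw [st_getD]
  rcases Nat.lt_or_ge (t + 1) (n + 1) with h | h
  · rw [if_pos h, stf_right (by omega)]
  · rw [if_neg (by omega), htop _ (by omega)]

/-- `getD` at position `t-2` (for `t ≥ 2`). -/
lemma st_getD_tm2 (ht2 : 2 ≤ t) (htn : t ≤ n) : (st A n t x).getD (t - 2) 0 = A t := by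
  rw [st_getD, if_pos (by omega), stf_left (by omega)]
  congr 1; omega

/-- One lowering step on a state. -/
lemma lower_set_eq (ht1 : 1 ≤ t) (hx1 : 1 ≤ x) (hxA : x ≤ A 0) :
    ((st A n t x).set (t - 1) (x - 1)).set t (A 0 - x + 1) = st A n t (x - 1) := by
  unfold st
  rw [set_map_range, set_map_range]
  apply List.map_congr_left
  intro i hi
  simp only [List.mem_range] at hi
  rcases eq_or_ne i t with rfl | hit
  · rw [if_pos rfl, stf_y rfl ht1]; omega
  · rw [if_neg hit]
    rcases eq_or_ne i (t - 1) with rfl | hitm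
    · rw [if_pos rfl, stf_x (by omega)]
    · rw [if_neg hitm]
      unfold stf
      have h1 : ¬ (i + 1 = t) := by omega
      rw [if_neg h1, if_neg hit, if_neg h1, if_neg hit]

/-- One raising step on a state. -/
lemma raise_set_eq (ht1 : 1 ≤ t) :
    ((st A n t x).set (t - 1) (x + 1)).set t (A 0 - x - 1) = st A n t (x + 1) := by
  unfold st
  rw [set_map_range, set_map_range]
  apply List.map_congr_left
  intro i hi
  simp only [List.mem_range] at hi
  rcases eq_or_ne i t with rfl | hit
  · rw [if_pos rfl, stf_y rfl ht1]; omega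
  · rw [if_neg hit]
    rcases eq_or_ne i (t - 1) with rfl | hitm
    · rw [if_pos rfl, stf_x (by omega)]
    · rw [if_neg hitm]
      unfold stf
      have h1 : ¬ (i + 1 = t) := by omega
      rw [if_neg h1, if_neg hit, if_neg h1, if_neg hit]

/-- Phase-boundary identity for the lowering run. -/
lemma st_boundary_low (ht1 : 1 ≤ t) (hle : A (t + 1) ≤ A 0) :
    st A n t (A (t + 1)) = st A n (t + 1) (A 0 - A (t + 1)) := by
  unfold st
  apply List.map_congr_left
  intro i hi
  simp only [List.mem_range] at hi
  unfold stf
  rcases Nat.lt_trichotomy (i + 1) t with h | h | h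
  · rw [if_pos h, if_pos (by omega)]
  · rw [if_neg (by omega), if_pos h, if_pos (by omega)]
    congr 1; omega
  · rcases eq_or_ne i t with rfl | h2
    · rw [if_neg (by omega), if_neg (by omega), if_pos rfl, if_neg (by omega),
        if_pos (by omega)]
    · rcases eq_or_ne i (t + 1) with rfl | h3
      · rw [if_neg (by omega), if_neg (by omega), if_neg (by omega), if_neg (by omega),
          if_neg (by omega), if_pos rfl]
        omega
      · rw [if_neg (by omega), if_neg (by omega), if_neg (by omega), if_neg (by omega),
          if_neg (by omega), if_neg (by omega)]

/-- Phase-boundary identity for the raising run. -/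
lemma st_boundary_raise (ht2 : 2 ≤ t) (hle : A t ≤ A 0) :
    st A n t (A 0 - A t) = st A n (t - 1) (A t) := by
  unfold st
  apply List.map_congr_left
  intro i hi
  simp only [List.mem_range] at hi
  unfold stf
  rcases Nat.lt_trichotomy (i + 1) (t - 1) with h | h | h
  · rw [if_pos (by omega), if_pos h]
  · rw [if_pos (by omega), if_neg (by omega), if_pos h]
    congr 1; omega
  · rcases eq_or_ne (i + 1) t with h2 | h2
    · rw [if_neg (by omega), if_pos h2, if_neg (by omega), if_neg (by omega),
        if_pos (by omega)]
    · rcases eq_or_ne i t with rfl | h3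
      · rw [if_neg (by omega), if_neg h2, if_pos rfl, if_neg (by omega), if_neg (by omega),
          if_neg (by omega)]
        omega
      · rw [if_neg (by omega), if_neg h2, if_neg h3, if_neg (by omega), if_neg (by omega),
          if_neg (by omega)]

end StateLemmas


/-! ### Normalization-index lemmas -/

lemma lnormIdx_stop {c : List ℕ} {i : ℕ} (f : ℕ)
    (h : ¬ (i + 2 < c.length ∧ c.getD i 0 = c.getD (i + 2) 0)) : lnormIdx c f i = i := by
  cases f with
  | zero => rfl
  | succ f => unfold lnormIdx; rw [if_neg h]

lemma lnormIdx_go {c : List ℕ} {i f : ℕ}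
    (h : i + 2 < c.length ∧ c.getD i 0 = c.getD (i + 2) 0) :
    lnormIdx c (f + 1) i = lnormIdx c f (i + 1) := by
  conv_lhs => unfold lnormIdx
  rw [if_pos h]

lemma lnormIdx_stable {c : List ℕ} :
    ∀ f f' i, c.length ≤ i + 2 + f → c.length ≤ i + 2 + f' → lnormIdx c f i = lnormIdx c f' i := by
  intro f
  induction f with
  | zero =>
    intro f' i h h'
    rw [lnormIdx_stop f' (by omega)]; rfl
  | succ f ih =>
    intro f' i h h'
    by_cases hc : i + 2 < c.length ∧ c.getD i 0 = c.getD (i + 2) 0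
    · cases f' with
      | zero => omega
      | succ f' =>
        rw [lnormIdx_go hc, lnormIdx_go hc]
        exact ih f' (i + 1) (by omega) (by omega)
    · rw [lnormIdx_stop _ hc, lnormIdx_stop _ hc]

lemma lowerMove_congr_idx {c : List ℕ} {i i' : ℕ}
    (h : lnormIdx c c.length i = lnormIdx c c.length i') : lowerMove c i = lowerMove c i' := by
  simp only [lowerMove, h]

lemma raiseMove_congr_idx {c : List ℕ} {i i' : ℕ}
    (h : rnormIdx c i = rnormIdx c i') : raiseMove c i = raiseMove c i' := by
  simp only [raiseMove, h]

/-! ### Congruence / halting lemmas for the iterations -/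

lemma lowerList_congr {c : List ℕ} {i i' : ℕ} (fuel : ℕ)
    (h : lowerMove c i = lowerMove c i') : lowerList fuel c i = lowerList fuel c i' := by
  cases fuel with
  | zero => rfl
  | succ fuel => unfold lowerList; rw [h]

lemma lowerColors_congr {c : List ℕ} {i i' : ℕ} (fuel : ℕ)
    (h : lowerMove c i = lowerMove c i') : lowerColors fuel c i = lowerColors fuel c i' := by
  cases fuel with
  | zero => rfl
  | succ fuel => unfold lowerColors; rw [h]

lemma raiseList_congr {c : List ℕ} {i i' : ℕ} (fuel : ℕ)
    (h : raiseMove c i = raiseMove c i') : raiseList fuel c i = raiseList fuel c i' := by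
  cases fuel with
  | zero => rfl
  | succ fuel => unfold raiseList; rw [h]

lemma lowerList_halt {c : List ℕ} {i : ℕ} (fuel : ℕ) (h : lowerMove c i = none) :
    lowerList fuel c i = [c] := by
  cases fuel with
  | zero => rfl
  | succ fuel => unfold lowerList; rw [h]

lemma lowerColors_halt {c : List ℕ} {i : ℕ} (fuel : ℕ) (h : lowerMove c i = none) :
    lowerColors fuel c i = [] := by
  cases fuel with
  | zero => rfl
  | succ fuel => unfold lowerColors; rw [h]

lemma raiseList_halt {c : List ℕ} {i : ℕ} (fuel : ℕ) (h : raiseMove c i = none) :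
    raiseList fuel c i = [c] := by
  cases fuel with
  | zero => rfl
  | succ fuel => unfold raiseList; rw [h]

lemma lowerList_cons {c c' : List ℕ} {i j : ℕ} (fuel : ℕ) (h : lowerMove c i = some (c', j)) :
    lowerList (fuel + 1) c i = c :: lowerList fuel c' j := by
  conv_lhs => unfold lowerList
  rw [h]

lemma lowerColors_cons {c c' : List ℕ} {i j : ℕ} (fuel : ℕ) (h : lowerMove c i = some (c', j)) :
    lowerColors (fuel + 1) c i = (j + 1) :: lowerColors fuel c' j := by
  conv_lhs => unfold lowerColors
  rw [h]

lemma raiseList_cons {c c' : List ℕ} {i j : ℕ} (fuel : ℕ) (h : raiseMove c i = some (c', j)) :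
    raiseList (fuel + 1) c i = c :: raiseList fuel c' j := by
  conv_lhs => unfold raiseList
  rw [h]

lemma lowerList_ne_nil {c : List ℕ} {i : ℕ} (fuel : ℕ) : lowerList fuel c i ≠ [] := by
  cases fuel with
  | zero => simp [lowerList]
  | succ fuel =>
    unfold lowerList
    cases h : lowerMove c i with
    | none => simp
    | some p => simp

lemma getLast?_cons_of_ne_nil {α : Type*} {l : List α} (a : α) (h : l ≠ []) :
    (a :: l).getLast? = l.getLast? := by
  cases l with
  | nil => exact absurd rfl h
  | cons b l => rw [List.getLast?_cons_cons]


/-! ### Moves on states -/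

section Moves

variable {A : ℕ → ℕ} {n t x : ℕ}

lemma lowerMove_st_move (ht1 : 1 ≤ t) (htn : t ≤ n) (htop : ∀ i, n + 1 ≤ i → A i = 0)
    (hgt : A (t + 1) < x) (hxA : x ≤ A 0) :
    lowerMove (st A n t x) (t - 1) = some (st A n t (x - 1), t - 1) := by
  have e2 : t - 1 + 1 = t := by omega
  have hj : lnormIdx (st A n t x) (st A n t x).length (t - 1) = t - 1 := by
    apply lnormIdx_stop
    rintro ⟨hlt, heq⟩
    have e : t - 1 + 2 = t + 1 := by omega
    rw [e, st_getD_tm1 ht1 htn, st_getD_tp1 ht1 htn htop] at heq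
    omega
  unfold lowerMove
  simp only [hj, st_getD_tm1 ht1 htn, e2, st_getD_t ht1 htn]
  rw [if_neg (by omega), lower_set_eq ht1 (by omega) hxA]

lemma lowerMove_st_boundary (ht1 : 1 ≤ t) (htn : t < n) (htop : ∀ i, n + 1 ≤ i → A i = 0) :
    lowerMove (st A n t (A (t + 1))) (t - 1) = lowerMove (st A n t (A (t + 1))) t := by
  apply lowerMove_congr_idx
  set c := st A n t (A (t + 1)) with hc
  have hlen : c.length = n + 1 := st_length A n t _
  have hcond : t - 1 + 2 < c.length ∧ c.getD (t - 1) 0 = c.getD (t - 1 + 2) 0 := by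
    have e : t - 1 + 2 = t + 1 := by omega
    rw [e, hlen, hc, st_getD_tm1 ht1 (by omega), st_getD_tp1 ht1 (by omega) htop]
    omega
  have h1 : c.length = (c.length - 1) + 1 := by omega
  rw [h1, lnormIdx_go hcond]
  have e2 : t - 1 + 1 = t := by omega
  rw [e2]
  exact lnormIdx_stable _ _ _ (by omega) (by omega)

lemma lowerMove_st_none (hn : 1 ≤ n) :
    lowerMove (st A n n 0) (n - 1) = none := by
  have hj : lnormIdx (st A n n 0) (st A n n 0).length (n - 1) = n - 1 := by
    apply lnormIdx_stop
    rintro ⟨hlt, -⟩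
    rw [st_length] at hlt
    omega
  unfold lowerMove
  simp only [hj, st_getD_tm1 hn (le_refl n)]
  simp

lemma raiseMove_st_move (ht1 : 1 ≤ t) (htn : t ≤ n)
    (hlt : x < A 0 - A t) :
    raiseMove (st A n t x) (t - 1) = some (st A n t (x + 1), t - 1) := by
  have hj : rnormIdx (st A n t x) (t - 1) = t - 1 := by
    rcases Nat.lt_or_ge t 2 with h2 | h2
    · have e : t - 1 = 0 := by omega
      rw [e]; rfl
    · obtain ⟨u, rfl⟩ : ∃ u, t = u + 2 := ⟨t - 2, by omega⟩
      have e : u + 2 - 1 = u + 1 := by omega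
      rw [e]
      unfold rnormIdx
      rw [if_neg]
      have hu2 : (st A n (u + 2) x).getD (u + 2) 0 = A 0 - x :=
        st_getD_t ht1 htn
      have hu : (st A n (u + 2) x).getD u 0 = A (u + 2) := by
        have := st_getD_tm2 (A := A) (n := n) (t := u + 2) (x := x) (by omega) htn
        simpa using this
      rw [hu2, hu]
      omega
  have e2 : t - 1 + 1 = t := by omega
  unfold raiseMove
  simp only [hj, e2, st_getD_t ht1 htn, st_getD_tm1 ht1 htn]
  rw [if_neg (by omega)]
  have e3 : A 0 - x - 1 = A 0 - (x + 1) := by omega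
  rw [raise_set_eq ht1]

lemma raiseMove_st_boundary (ht2 : 2 ≤ t) (htn : t ≤ n) (hAt : A t ≤ A 0) :
    raiseMove (st A n t (A 0 - A t)) (t - 1) = raiseMove (st A n t (A 0 - A t)) (t - 2) := by
  apply raiseMove_congr_idx
  obtain ⟨u, rfl⟩ : ∃ u, t = u + 2 := ⟨t - 2, by omega⟩
  have e : u + 2 - 1 = u + 1 := by omega
  have e' : u + 2 - 2 = u := by omega
  rw [e, e']
  have h1 : (st A n (u + 2) (A 0 - A (u + 2))).getD (u + 2) 0 = A 0 - (A 0 - A (u + 2)) :=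
    st_getD_t (by omega) htn
  have h2 : (st A n (u + 2) (A 0 - A (u + 2))).getD u 0 = A (u + 2) := by
    have := st_getD_tm2 (A := A) (n := n) (t := u + 2) (x := A 0 - A (u + 2)) (by omega) htn
    simpa using this
  have hcond : (st A n (u + 2) (A 0 - A (u + 2))).getD (u + 2) 0
      = (st A n (u + 2) (A 0 - A (u + 2))).getD u 0 := by
    rw [h1, h2]; omega
  conv_lhs => unfold rnormIdx
  rw [if_pos hcond]

lemma raiseMove_st_none (hn : 1 ≤ n) (htop : ∀ i, n + 1 ≤ i → A i = 0) :
    raiseMove (st A n 1 (A 0)) 0 = none := by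
  unfold raiseMove
  have hj : rnormIdx (st A n 1 (A 0)) 0 = 0 := rfl
  simp only [hj]
  have h1 : (st A n 1 (A 0)).getD (0 + 1) 0 = 0 := by
    have := st_getD_t (A := A) (n := n) (t := 1) (x := A 0) (le_refl 1) hn
    simpa using this
  rw [h1, if_pos rfl]

end Moves


/-! ### Counting and colors -/

def dltL (A : ℕ → ℕ) (j : ℕ) : ℕ := A 0 - A (j + 1) - A (j + 2)

def NcntL (A : ℕ → ℕ) (n t x : ℕ) : ℕ :=
  (x - A (t + 1)) + ∑ k ∈ Finset.range (n - t), dltL A (k + t)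

def ColorsL (A : ℕ → ℕ) (n t x : ℕ) : List ℕ :=
  List.replicate (x - A (t + 1)) t ++
    (List.range (n - t)).flatMap (fun k => List.replicate (dltL A (k + t)) (k + t + 1))

lemma flatMap_congr' {α β : Type*} {l : List α} {f g : α → List β}
    (h : ∀ a ∈ l, f a = g a) : l.flatMap f = l.flatMap g := by
  induction l with
  | nil => rfl
  | cons a l ih =>
    rw [List.flatMap_cons, List.flatMap_cons, h a (by simp), ih (fun b hb => h b (by simp [hb]))]

lemma NcntL_boundary {A : ℕ → ℕ} {n t : ℕ} (htlt : t < n) :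
    NcntL A n t (A (t + 1)) = NcntL A n (t + 1) (A 0 - A (t + 1)) := by
  unfold NcntL
  rw [show n - t = (n - (t + 1)) + 1 from by omega, Finset.sum_range_succ']
  rw [Finset.sum_congr rfl
    (fun k _ => show dltL A (k + 1 + t) = dltL A (k + (t + 1)) from by
      rw [show k + 1 + t = k + (t + 1) from by omega])]
  simp only [Nat.zero_add]
  unfold dltL
  rw [show t + 1 + 1 = t + 2 from rfl]
  omega

lemma ColorsL_boundary {A : ℕ → ℕ} {n t : ℕ} (htlt : t < n) :
    ColorsL A n t (A (t + 1)) = ColorsL A n (t + 1) (A 0 - A (t + 1)) := by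
  unfold ColorsL
  rw [show n - t = (n - (t + 1)) + 1 from by omega, List.range_succ_eq_map,
    List.flatMap_cons, List.flatMap_map]
  rw [show A (t + 1) - A (t + 1) = 0 from by omega, List.replicate_zero, List.nil_append]
  rw [show A 0 - A (t + 1) - A (t + 1 + 1) = dltL A (0 + t) from by
    unfold dltL; simp only [Nat.zero_add]]
  rw [flatMap_congr' (f := fun k => List.replicate (dltL A (Nat.succ k + t)) (Nat.succ k + t + 1))
    (g := fun k => List.replicate (dltL A (k + (t + 1))) (k + (t + 1) + 1))
    (fun k _ => by
      show List.replicate (dltL A (Nat.succ k + t)) (Nat.succ k + t + 1)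
          = List.replicate (dltL A (k + (t + 1))) (k + (t + 1) + 1)
      rw [show Nat.succ k + t = k + (t + 1) from by omega])]
  simp only [Nat.zero_add]

lemma NcntL_move {A : ℕ → ℕ} {n t x : ℕ} (h : A (t + 1) < x) :
    NcntL A n t x = NcntL A n t (x - 1) + 1 := by
  unfold NcntL; omega

lemma ColorsL_move {A : ℕ → ℕ} {n t x : ℕ} (h : A (t + 1) < x) :
    ColorsL A n t x = t :: ColorsL A n t (x - 1) := by
  unfold ColorsL
  rw [show x - A (t + 1) = (x - 1 - A (t + 1)) + 1 from by omega, List.replicate_succ,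
    List.cons_append]


/-! ### The main lowering run lemma -/

lemma lower_halt {A : ℕ → ℕ} {n : ℕ} (hn : 1 ≤ n) (htop : ∀ i, n + 1 ≤ i → A i = 0)
    (fuel : ℕ) :
    lowerColors fuel (st A n n 0) (n - 1) = ColorsL A n n 0 ∧
    (lowerList fuel (st A n n 0) (n - 1)).getLast? = some (st A n n 0) ∧
    ∀ z, z ∈ lowerList fuel (st A n n 0) (n - 1) ↔
      ∃ s y, n ≤ s ∧ s ≤ n ∧ A (s + 1) ≤ y ∧ y ≤ A 0 - A s ∧ (s = n → y ≤ 0) ∧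
        z = st A n s y := by
  have hmv := lowerMove_st_none (A := A) hn
  refine ⟨?_, ?_, ?_⟩
  · rw [lowerColors_halt fuel hmv]
    unfold ColorsL
    simp [Nat.sub_self]
  · rw [lowerList_halt fuel hmv]
    rfl
  · intro z
    rw [lowerList_halt fuel hmv]
    simp only [List.mem_singleton]
    constructor
    · rintro rfl
      exact ⟨n, 0, le_refl n, le_refl n, by rw [htop (n + 1) (by omega)],
        Nat.zero_le _, fun _ => le_refl 0, rfl⟩
    · rintro ⟨s, y, h₁, h₂, h₃, h₄, h₅, rfl⟩
      obtain rfl : s = n := by omega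
      obtain rfl : y = 0 := by have := h₅ rfl; omega
      rfl

lemma lower_main {A : ℕ → ℕ} {n : ℕ} (hn : 1 ≤ n)
    (htop : ∀ i, n + 1 ≤ i → A i = 0) (hSpr : ∀ s, s ≤ n → A s + A (s + 1) ≤ A 0) :
    ∀ μ t x fuel, 1 ≤ t → t ≤ n → A (t + 1) ≤ x → x ≤ A 0 - A t →
      NcntL A n t x ≤ fuel → NcntL A n t x + (n - t) ≤ μ →
      (lowerColors fuel (st A n t x) (t - 1) = ColorsL A n t x ∧
       (lowerList fuel (st A n t x) (t - 1)).getLast? = some (st A n n 0) ∧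
       ∀ z, z ∈ lowerList fuel (st A n t x) (t - 1) ↔
         ∃ s y, t ≤ s ∧ s ≤ n ∧ A (s + 1) ≤ y ∧ y ≤ A 0 - A s ∧ (s = t → y ≤ x) ∧
           z = st A n s y) := by
  intro μ
  induction μ with
  | zero =>
    intro t x fuel ht1 htn hxl hxu hfuel hμ
    obtain rfl : n = t := by omega
    obtain rfl : x = 0 := by
      have h := htop (n + 1) (by omega)
      unfold NcntL at hμ
      omega
    exact lower_halt hn htop fuel
  | succ μ ih =>
    intro t x fuel ht1 htn hxl hxu hfuel hμ
    rcases Nat.lt_or_ge (A (t + 1)) x with hgt | hle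
    · -- a genuine lowering move at index t-1
      have hrec : NcntL A n t x = NcntL A n t (x - 1) + 1 := NcntL_move hgt
      cases fuel with
      | zero => omega
      | succ fuel =>
        have hxA : x ≤ A 0 := by have := hSpr t htn; omega
        have hmv := lowerMove_st_move ht1 htn htop hgt hxA
        obtain ⟨IH1, IH2, IH3⟩ :=
          ih t (x - 1) fuel ht1 htn (by omega) (by omega) (by omega) (by omega)
        have e2 : t - 1 + 1 = t := by omega
        refine ⟨?_, ?_, ?_⟩
        · rw [lowerColors_cons fuel hmv, IH1, e2, ColorsL_move hgt]
        · rw [lowerList_cons fuel hmv, getLast?_cons_of_ne_nil _ (lowerList_ne_nil fuel), IH2]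
        · intro z
          rw [lowerList_cons fuel hmv, List.mem_cons, IH3 z]
          constructor
          · rintro (rfl | ⟨s, y, h₁, h₂, h₃, h₄, h₅, rfl⟩)
            · exact ⟨t, x, le_refl t, htn, hxl, hxu, fun _ => le_refl x, rfl⟩
            · exact ⟨s, y, h₁, h₂, h₃, h₄, fun hs => by have := h₅ hs; omega, rfl⟩
          · rintro ⟨s, y, h₁, h₂, h₃, h₄, h₅, rfl⟩
            by_cases hst : s = t ∧ y = x
            · left; rw [hst.1, hst.2]
            · right
              refine ⟨s, y, h₁, h₂, h₃, h₄, fun hs => ?_, rfl⟩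
              have h5 := h₅ hs
              rcases eq_or_ne y x with h | h
              · exact absurd ⟨hs, h⟩ hst
              · omega
    · -- x = A (t+1) : phase boundary or halt
      obtain rfl : x = A (t + 1) := by omega
      rcases Nat.lt_or_ge t n with htlt | htge
      · -- phase boundary
        have hA1 : A (t + 1) ≤ A 0 := by have := hSpr (t + 1) (by omega); omega
        have hst := st_boundary_low (n := n) ht1 hA1
        have hmv := lowerMove_st_boundary ht1 htlt htop
        have hNc := NcntL_boundary (A := A) htlt
        have hCo := ColorsL_boundary (A := A) htlt
        have hy1 : A (t + 1 + 1) ≤ A 0 - A (t + 1) := by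
          have := hSpr (t + 1) (by omega); omega
        obtain ⟨IH1, IH2, IH3⟩ :=
          ih (t + 1) (A 0 - A (t + 1)) fuel (by omega) htlt hy1 (le_refl _)
            (by omega) (by omega)
        have e : t + 1 - 1 = t := rfl
        rw [e] at IH1 IH2 IH3
        refine ⟨?_, ?_, ?_⟩
        · rw [lowerColors_congr fuel hmv, hst, IH1, hCo]
        · rw [lowerList_congr fuel hmv, hst, IH2]
        · intro z
          rw [lowerList_congr fuel hmv, hst, IH3 z]
          constructor
          · rintro ⟨s, y, h₁, h₂, h₃, h₄, h₅, rfl⟩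
            exact ⟨s, y, by omega, h₂, h₃, h₄, fun hs => by omega, rfl⟩
          · rintro ⟨s, y, h₁, h₂, h₃, h₄, h₅, rfl⟩
            rcases eq_or_ne s t with rfl | hst'
            · obtain rfl : y = A (s + 1) := by have := h₅ rfl; omega
              exact ⟨s + 1, A 0 - A (s + 1), le_refl _, htlt, hy1, le_refl _,
                fun _ => le_refl _, hst⟩
            · exact ⟨s, y, by omega, h₂, h₃, h₄, fun hs => hs ▸ h₄, rfl⟩
      · -- halt
        obtain rfl : n = t := by omega
        rw [htop (n + 1) (by omega)]
        exact lower_halt hn htop fuel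


/-! ### The main raising run lemma -/

def NrL (A : ℕ → ℕ) (t x : ℕ) : ℕ :=
  (A 0 - A t - x) + ∑ k ∈ Finset.range (t - 1), dltL A k

lemma NrL_move {A : ℕ → ℕ} {t x : ℕ} (h : x < A 0 - A t) :
    NrL A t x = NrL A t (x + 1) + 1 := by
  unfold NrL; omega

lemma NrL_boundary {A : ℕ → ℕ} {t : ℕ} (ht2 : 2 ≤ t) :
    NrL A t (A 0 - A t) = NrL A (t - 1) (A t) := by
  unfold NrL
  rw [show t - 1 = (t - 2) + 1 from by omega, Finset.sum_range_succ,
    show t - 2 + 1 - 1 = t - 2 from by omega]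
  unfold dltL
  rw [show t - 2 + 1 = t - 1 from by omega, show t - 2 + 2 = t from by omega]
  omega

lemma raise_main {A : ℕ → ℕ} {n : ℕ} (hn : 1 ≤ n) (hA1 : A 1 = 0)
    (htop : ∀ i, n + 1 ≤ i → A i = 0) (hSpr : ∀ s, s ≤ n → A s + A (s + 1) ≤ A 0) :
    ∀ μ t x fuel, 1 ≤ t → t ≤ n → A (t + 1) ≤ x → x ≤ A 0 - A t →
      NrL A t x ≤ fuel → NrL A t x + t ≤ μ →
      ∀ z, z ∈ raiseList fuel (st A n t x) (t - 1) ↔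
        ∃ s y, 1 ≤ s ∧ s ≤ t ∧ A (s + 1) ≤ y ∧ y ≤ A 0 - A s ∧ (s = t → x ≤ y) ∧
          z = st A n s y := by
  intro μ
  induction μ with
  | zero => intro t x fuel ht1 htn hxl hxu hfuel hμ; omega
  | succ μ ih =>
    intro t x fuel ht1 htn hxl hxu hfuel hμ
    rcases Nat.lt_or_ge x (A 0 - A t) with hlt | hge
    · -- a genuine raising move at index t-1
      have hrec : NrL A t x = NrL A t (x + 1) + 1 := NrL_move hlt
      cases fuel with
      | zero => omega
      | succ fuel =>
        have hmv := raiseMove_st_move ht1 htn hlt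
        have IH := ih t (x + 1) fuel ht1 htn (by omega) hlt (by omega) (by omega)
        intro z
        rw [raiseList_cons fuel hmv, List.mem_cons, IH z]
        constructor
        · rintro (rfl | ⟨s, y, h₁, h₂, h₃, h₄, h₅, rfl⟩)
          · exact ⟨t, x, ht1, le_refl t, hxl, by omega, fun _ => le_refl x, rfl⟩
          · exact ⟨s, y, h₁, h₂, h₃, h₄, fun hs => by have := h₅ hs; omega, rfl⟩
        · rintro ⟨s, y, h₁, h₂, h₃, h₄, h₅, rfl⟩
          by_cases hst : s = t ∧ y = x
          · left; rw [hst.1, hst.2]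
          · right
            refine ⟨s, y, h₁, h₂, h₃, h₄, fun hs => ?_, rfl⟩
            have h5 := h₅ hs
            rcases eq_or_ne y x with h | h
            · exact absurd ⟨hs, h⟩ hst
            · omega
    · obtain rfl : x = A 0 - A t := by omega
      rcases Nat.lt_or_ge t 2 with ht2 | ht2
      · -- t = 1 : halting at the initial element
        obtain rfl : t = 1 := by omega
        simp only [hA1, Nat.sub_zero, show (1 : ℕ) - 1 = 0 from rfl]
        have hmv := raiseMove_st_none hn htop
        intro z
        rw [raiseList_halt fuel hmv]
        simp only [List.mem_singleton]
        constructor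
        · rintro rfl
          refine ⟨1, A 0, le_refl 1, le_refl 1, ?_, ?_, fun _ => le_refl _, rfl⟩
          · have := hSpr 1 hn; omega
          · have := hA1; omega
        · rintro ⟨s, y, h₁, h₂, h₃, h₄, h₅, rfl⟩
          obtain rfl : s = 1 := by omega
          obtain rfl : y = A 0 := by
            have := h₅ rfl
            have := hA1
            omega
          rfl
      · -- phase boundary towards t-1
        have hAt : A t ≤ A 0 := by have := hSpr t htn; omega
        have hst := st_boundary_raise (n := n) ht2 hAt
        have hmv := raiseMove_st_boundary (n := n) ht2 htn hAt
        have hNr := NrL_boundary (A := A) ht2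
        have hy1 : A (t - 1 + 1) ≤ A t := by rw [show t - 1 + 1 = t from by omega]
        have hy2 : A t ≤ A 0 - A (t - 1) := by
          have h := hSpr (t - 1) (by omega)
          rw [show t - 1 + 1 = t from by omega] at h
          omega
        have IH := ih (t - 1) (A t) fuel (by omega) (by omega) hy1 hy2 (by omega) (by omega)
        rw [show t - 1 - 1 = t - 2 from by omega] at IH
        intro z
        rw [raiseList_congr fuel hmv, hst, IH z]
        constructor
        · rintro ⟨s, y, h₁, h₂, h₃, h₄, h₅, rfl⟩
          exact ⟨s, y, h₁, by omega, h₃, h₄, fun hs => by omega, rfl⟩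
        · rintro ⟨s, y, h₁, h₂, h₃, h₄, h₅, rfl⟩
          rcases eq_or_ne s t with rfl | hst'
          · obtain rfl : y = A 0 - A s := by have := h₅ rfl; omega
            refine ⟨s - 1, A s, by omega, le_refl _, ?_, ?_, fun _ => le_refl _, hst⟩
            · rw [show s - 1 + 1 = s from by omega]
            · have h := hSpr (s - 1) (by omega)
              rw [show s - 1 + 1 = s from by omega] at h
              omega
          · refine ⟨s, y, h₁, by omega, h₃, h₄, fun hs => ?_, rfl⟩
            have h3 := h₃
            rw [hs, show t - 1 + 1 = t from by omega] at h3
            exact h3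


/-! ### Monotonicity of the color sequence -/

lemma chain'_flatMap_replicate (N : ℕ) (c : ℕ → ℕ) :
    ((List.range N).flatMap fun t => List.replicate (c t) (t + 1)).Chain' (· ≤ ·) := by
  induction N with
  | zero => exact List.isChain_nil
  | succ N ihN =>
    rw [List.range_succ, List.flatMap_append, List.flatMap_cons, List.flatMap_nil,
      List.append_nil, List.Chain', List.isChain_append]
    refine ⟨ihN, List.isChain_replicate_of_rel _ (le_refl _), ?_⟩
    intro x hx y hy
    have hxmem : x ∈ (List.range N).flatMap fun t => List.replicate (c t) (t + 1) := by
      obtain ⟨h, rfl⟩ := List.mem_getLast?_eq_getLast hx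
      exact List.getLast_mem h
    obtain ⟨t, ht, hx2⟩ := List.mem_flatMap.1 hxmem
    obtain ⟨-, rfl⟩ := List.mem_replicate.1 hx2
    rw [List.head?_replicate] at hy
    by_cases h0 : c N = 0
    · rw [if_pos h0] at hy; simp at hy
    · rw [if_neg h0] at hy
      have hy' : y = N + 1 := by
        simpa [eq_comm] using hy
      have := List.mem_range.1 ht
      omega

lemma ColorsL_one {A : ℕ → ℕ} {n : ℕ} (hn : 1 ≤ n) (hA1 : A 1 = 0) :
    ColorsL A n 1 (A 0) = (List.range n).flatMap (fun t => List.replicate (dltL A t) (t + 1)) := by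
  unfold ColorsL
  conv_rhs => rw [show n = (n - 1) + 1 from by omega, List.range_succ_eq_map,
    List.flatMap_cons, List.flatMap_map]
  congr 1
  congr 1
  rw [show (1 : ℕ) + 1 = 2 from rfl]
  unfold dltL
  simp only [Nat.zero_add]
  omega


lemma getElem_idx_congr {α : Type*} (l : List α) {i j : ℕ} (h : i = j) (hi : i < l.length) :
    l[i] = l[j]'(h ▸ hi) := by subst h; rfl

end OHara

open OHara in
/-- For an initial element `𝔞 = (a_0, 0, a_2, …, a_n)`: (i) the color sequence of
`T_0(𝔞)` (read from lowest rank to highest rank, i.e. along the lowering algorithm) is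
`(1^{a_0-a_2}, 2^{a_0-a_2-a_3}, …, j^{a_0-a_j-a_{j+1}}, …, n^{a_0-a_n})`, and in particular
is nondecreasing; (ii) the terminal element of `T_0(𝔞)` is `𝔟 = (a_2, …, a_n, 0, a_0)`;
(iii) `T_0(𝔞) = T_{n-1}(𝔟)`. -/
theorem transversal_chain_of_initial (n m : ℕ) (hn : 1 ≤ n) (hm : 1 ≤ m)
    (a : List ℕ) (hlen : a.length = n + 1) (hsum : a.sum = m)
    (h1 : a.getD 1 0 = 0) (h0 : a.getD 0 0 = sprL a) :
    lowerColors (a.length * a.sum) a 0 =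
      (List.range n).flatMap (fun t =>
        List.replicate (a.getD 0 0 - a.getD (t + 1) 0 - a.getD (t + 2) 0) (t + 1)) ∧
    (lowerColors (a.length * a.sum) a 0).Chain' (· ≤ ·) ∧
    (lowerList (a.length * a.sum) a 0).getLast? = some (a.drop 2 ++ [0, a.getD 0 0]) ∧
    Tset a 0 = Tset (a.drop 2 ++ [0, a.getD 0 0]) (n - 1) := by
  classical
  set A : ℕ → ℕ := fun i => a.getD i 0 with hA
  have hA1 : A 1 = 0 := h1
  have hA00 : A 0 = sprL a := h0
  have htop : ∀ i, n + 1 ≤ i → A i = 0 := by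
    intro i hi
    show a.getD i 0 = 0
    exact List.getD_eq_default _ _ (by rw [hlen]; exact hi)
  have hpair : ∀ s, s < n → A s + A (s + 1) ≤ A 0 := by
    intro s hs
    rw [hA00]
    unfold sprL
    exact Finset.le_sup (f := fun i => a.getD i 0 + a.getD (i + 1) 0)
      (by rw [hlen]; simp only [Nat.add_sub_cancel, Finset.mem_range]; exact hs)
  have hSpr : ∀ s, s ≤ n → A s + A (s + 1) ≤ A 0 := by
    intro s hs
    rcases Nat.lt_or_ge s n with h | h
    · exact hpair s h
    · rw [show s = n from by omega, htop (n + 1) (by omega)]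
      have h2 := hpair (n - 1) (by omega)
      rw [show n - 1 + 1 = n from by omega] at h2
      omega
  have ha_st : a = st A n 1 (A 0) := by
    apply List.ext_getElem (by rw [hlen, st_length])
    intro i h₁ h₂
    rw [show (st A n 1 (A 0))[i]'h₂ = stf A 1 (A 0) i from by simp [st]]
    rcases Nat.lt_trichotomy i 1 with h | h | h
    · obtain rfl : i = 0 := by omega
      rw [stf_x rfl]
      exact (List.getD_eq_getElem a 0 h₁).symm
    · rw [stf_y h (le_refl 1), Nat.sub_self]
      subst h
      rw [← h1]
      exact (List.getD_eq_getElem a 0 h₁).symm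
    · rw [stf_right h]
      exact (List.getD_eq_getElem a 0 h₁).symm
  have hb_st : a.drop 2 ++ [0, a.getD 0 0] = st A n n 0 := by
    have hld : (a.drop 2).length = n - 1 := by rw [List.length_drop, hlen]; omega
    apply List.ext_getElem
    · rw [st_length]
      simp only [List.length_append, hld, List.length_cons, List.length_nil]
      omega
    intro i h₁ h₂
    have hi : i < n + 1 := by have := h₂; rwa [st_length] at this
    rw [show (st A n n 0)[i]'h₂ = stf A n 0 i from by simp [st]]
    rcases Nat.lt_trichotomy i (n - 1) with h | h | h
    · rw [List.getElem_append_left (by omega : i < (a.drop 2).length), List.getElem_drop,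
        stf_left (by omega)]
      rw [getElem_idx_congr a (show 2 + i = i + 2 from by omega) (by rw [hlen]; omega)]
      exact (List.getD_eq_getElem a 0 (by rw [hlen]; omega)).symm
    · rw [List.getElem_append_right (by omega : (a.drop 2).length ≤ i), stf_x (by omega)]
      rw [getElem_idx_congr _ (show i - (a.drop 2).length = 0 from by omega)
        (by simp only [List.length_cons, List.length_nil]; omega)]
      rfl
    · rw [List.getElem_append_right (by omega : (a.drop 2).length ≤ i),
        stf_y (by omega : i = n) hn, Nat.sub_zero]
      rw [getElem_idx_congr _ (show i - (a.drop 2).length = 1 from by omega)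
        (by simp only [List.length_cons, List.length_nil]; omega)]
      rfl
  -- fuel bounds
  have hA0m : A 0 ≤ m := by
    have h₂ : (0 : ℕ) < a.length := by omega
    have := List.single_le_sum (l := a) (fun x _ => Nat.zero_le x) (a[0]'h₂)
      (List.getElem_mem h₂)
    rw [hsum] at this
    calc A 0 = a[0]'h₂ := List.getD_eq_getElem a 0 h₂
    _ ≤ m := this
  have hdlt : ∀ k, dltL A k ≤ A 0 := by intro k; unfold dltL; omega
  have hsum_le : ∀ (N : ℕ), ∑ k ∈ Finset.range N, dltL A (k + 1) ≤ N * A 0 := by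
    intro N
    calc ∑ k ∈ Finset.range N, dltL A (k + 1) ≤ ∑ _k ∈ Finset.range N, A 0 :=
          Finset.sum_le_sum (fun k _ => hdlt (k + 1))
    _ = N * A 0 := by rw [Finset.sum_const, Finset.card_range, smul_eq_mul]
  have hsum_le' : ∀ (N : ℕ), ∑ k ∈ Finset.range N, dltL A k ≤ N * A 0 := by
    intro N
    calc ∑ k ∈ Finset.range N, dltL A k ≤ ∑ _k ∈ Finset.range N, A 0 :=
          Finset.sum_le_sum (fun k _ => hdlt k)
    _ = N * A 0 := by rw [Finset.sum_const, Finset.card_range, smul_eq_mul]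
  have hmulF : n * A 0 ≤ a.length * a.sum := by
    rw [hlen, hsum]
    calc n * A 0 ≤ n * m := Nat.mul_le_mul_left n hA0m
    _ ≤ (n + 1) * m := Nat.mul_le_mul_right m (by omega)
  have hNfuel : NcntL A n 1 (A 0) ≤ a.length * a.sum := by
    refine le_trans ?_ hmulF
    unfold NcntL
    have h1' := hsum_le (n - 1)
    have hmul : (n - 1) * A 0 + A 0 = n * A 0 := by
      have h' : (n - 1 + 1) * A 0 = (n - 1) * A 0 + 1 * A 0 := Nat.add_mul _ _ _
      rw [show n - 1 + 1 = n from by omega, Nat.one_mul] at h'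
      omega
    omega
  -- run the lowering algorithm
  obtain ⟨C1, C2, C3⟩ := lower_main hn htop hSpr (NcntL A n 1 (A 0) + (n - 1)) 1 (A 0)
    (a.length * a.sum) (le_refl 1) hn
    (by have := hSpr 1 hn; omega) (by rw [hA1]; omega) hNfuel (le_refl _)
  rw [← ha_st] at C1 C2 C3
  have hmainColors : lowerColors (a.length * a.sum) a 0 =
      (List.range n).flatMap (fun t => List.replicate (dltL A t) (t + 1)) := by
    rw [show (0 : ℕ) = 1 - 1 from rfl, C1]
    exact ColorsL_one hn hA1
  refine ⟨hmainColors, ?_, ?_, ?_⟩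
  · rw [hmainColors]
    exact chain'_flatMap_replicate n _
  · rw [show (0 : ℕ) = 1 - 1 from rfl, C2, hb_st]
  · -- the two transversal chains agree
    have hra : raiseMove a 0 = none := by
      unfold raiseMove
      rw [show rnormIdx a 0 = 0 from rfl]
      have h1' : a[1]?.getD 0 = 0 := by
        rw [← List.getD_eq_getElem?_getD]
        exact h1
      simp [h1']
    have hrl : raiseList (rkL a) a 0 = [a] := raiseList_halt _ hra
    have hlb : lowerMove (a.drop 2 ++ [0, a.getD 0 0]) (n - 1) = none := by
      rw [hb_st]; exact lowerMove_st_none hn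
    have hNr_rk : NrL A n 0 ≤ rkL (a.drop 2 ++ [0, a.getD 0 0]) := by
      rw [hb_st]
      have hup : NrL A n 0 ≤ n * A 0 := by
        unfold NrL
        have hs' := hsum_le' (n - 1)
        have hmul : (n - 1) * A 0 + A 0 = n * A 0 := by
          have h' : (n - 1 + 1) * A 0 = (n - 1) * A 0 + 1 * A 0 := Nat.add_mul _ _ _
          rw [show n - 1 + 1 = n from by omega, Nat.one_mul] at h'
          omega
        omega
      refine le_trans hup ?_
      unfold rkL
      rw [st_length]
      have hmem : n ∈ Finset.range (n + 1) := Finset.self_mem_range_succ n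
      have hsingle := Finset.single_le_sum (f := fun i => i * (st A n n 0).getD i 0)
        (fun i _ => Nat.zero_le _) hmem
      rw [st_getD_t hn (le_refl n), Nat.sub_zero] at hsingle
      exact hsingle
    have hlow_b : ∀ fuel, lowerList fuel (a.drop 2 ++ [0, a.getD 0 0]) (n - 1)
        = [a.drop 2 ++ [0, a.getD 0 0]] := fun fuel => lowerList_halt fuel hlb
    have hraise_b := raise_main hn hA1 htop hSpr (NrL A n 0 + n) n 0
      (rkL (a.drop 2 ++ [0, a.getD 0 0])) hn (le_refl n)
      (by rw [htop (n + 1) (by omega)]) (Nat.zero_le _) hNr_rk (le_refl _)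
    rw [← hb_st] at hraise_b
    apply Set.ext
    intro z
    simp only [Tset, Set.mem_setOf_eq]
    rw [hrl, hlow_b]
    constructor
    · rintro (hz | hz)
      · simp only [List.mem_singleton] at hz
        subst hz
        left
        rw [hraise_b]
        exact ⟨1, A 0, le_refl 1, hn, (by have := hSpr 1 hn; omega),
          (by rw [hA1]; omega), fun _ => Nat.zero_le _, ha_st⟩
      · have h3 := (C3 z).1 hz
        obtain ⟨s, y, hs1, hs2, hy1, hy2, hcap, rfl⟩ := h3
        left
        rw [hraise_b]
        exact ⟨s, y, hs1, hs2, hy1, hy2, fun _ => Nat.zero_le _, rfl⟩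
    · rintro (hz | hz)
      · rw [hraise_b] at hz
        obtain ⟨s, y, hs1, hs2, hy1, hy2, hcap, rfl⟩ := hz
        right
        rw [show (0 : ℕ) = 1 - 1 from rfl, C3]
        refine ⟨s, y, hs1, hs2, hy1, hy2, fun hs => ?_, rfl⟩
        rw [hs] at hy2
        omega
      · simp only [List.mem_singleton] at hz
        subst hz
        right
        rw [show (0 : ℕ) = 1 - 1 from rfl, C3]
        exact ⟨n, 0, hn, le_refl n, (by rw [htop (n + 1) (by omega)]), Nat.zero_le _,
          fun _ => Nat.zero_le _, hb_st⟩
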